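/- The convex hull of C_max(nA,nB,m) is contained in the closure of C_max(nA,nB,m) (so C_max is dense in its own convex hull); likewise, the convex hull of C_max^s(n,m) is contained in the closure of C_max^s(n,m). -/

import Mathlib

open scoped BigOperators

/-- A correlation with `nA` questions for Alice, `nB` questions for Bob and `m` outcomes. -/
def IsCorrelation {nA nB m : ℕ} (p : Fin nA → Fin nB → Fin m → Fin m → ℝ) : Prop :=
  (∀ x y i j, 0 ≤ p x y i j) ∧ ∀ x y, (∑ i, ∑ j, p x y i j) = 1

/-- A projection-valued measure with `m` outcomes on `ℂ^d`. -/
def IsPVM {d m : ℕ} (E : Fin m → Matrix (Fin d) (Fin d) ℂ) : Prop :=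
  (∀ i, (E i).IsHermitian) ∧ (∀ i, E i * E i = E i) ∧ (∑ i, E i = 1)

/-- The set `C_{max,d}(nA,nB,m)` of maximally entangled correlations in dimension `d`. -/
def CmaxD (nA nB m d : ℕ) : Set (Fin nA → Fin nB → Fin m → Fin m → ℝ) :=
  {p | IsCorrelation p ∧
    ∃ (E : Fin nA → Fin m → Matrix (Fin d) (Fin d) ℂ)
      (F : Fin nB → Fin m → Matrix (Fin d) (Fin d) ℂ),
      (∀ x, IsPVM (E x)) ∧ (∀ y, IsPVM (F y)) ∧
      ∀ x y i j, (p x y i j : ℂ) = (1 / (d : ℂ)) * (E x i * F y j).trace}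

/-- The set `C_max(nA,nB,m)` of maximally entangled correlations. -/
def Cmax (nA nB m : ℕ) : Set (Fin nA → Fin nB → Fin m → Fin m → ℝ) :=
  ⋃ (d : ℕ) (_ : 1 ≤ d), CmaxD nA nB m d

/-- A correlation with the same questions for Alice and Bob is synchronous if
`p x x i j = 0` whenever `i ≠ j`. -/
def Synchronous {n m : ℕ} (p : Fin n → Fin n → Fin m → Fin m → ℝ) : Prop :=
  ∀ x i j, i ≠ j → p x x i j = 0

/-- The set `C_max^s(n,m)` of synchronous maximally entangled correlations. -/
def CmaxSync (n m : ℕ) : Set (Fin n → Fin n → Fin m → Fin m → ℝ) :=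
  {p ∈ Cmax n n m | Synchronous p}

open Matrix

/-- PVM over a general finite index type. -/
def IsPVMG {n : Type*} [Fintype n] [DecidableEq n] {m : ℕ} (E : Fin m → Matrix n n ℂ) : Prop :=
  (∀ i, (E i).IsHermitian) ∧ (∀ i, E i * E i = E i) ∧ (∑ i, E i = 1)

lemma trace_submatrix_equiv' {n m' : Type*} [Fintype n] [Fintype m'] (A : Matrix n n ℂ)
    (e : m' ≃ n) : (A.submatrix e e).trace = A.trace := by
  simp only [Matrix.trace, Matrix.diag, submatrix_apply]
  exact e.sum_comp fun i => A i i

lemma trace_fromBlocks' {n1 n2 : Type*} [Fintype n1] [Fintype n2]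
    (A : Matrix n1 n1 ℂ) (B : Matrix n1 n2 ℂ) (C : Matrix n2 n1 ℂ) (D : Matrix n2 n2 ℂ) :
    (fromBlocks A B C D).trace = A.trace + D.trace := by
  simp [Matrix.trace, Fintype.sum_sum_type, Matrix.diag]

lemma isPVMG_blockDiagonal {n : Type*} [Fintype n] [DecidableEq n] {m : ℕ} (c : ℕ)
    {E : Fin m → Matrix n n ℂ} (h : IsPVMG E) :
    IsPVMG (fun i => blockDiagonal (fun _ : Fin c => E i)) := by
  obtain ⟨h1, h2, h3⟩ := h
  refine ⟨fun i => ?_, fun i => ?_, ?_⟩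
  · show _ = _
    rw [blockDiagonal_conjTranspose]
    simp only [(h1 _).eq]
  · rw [← blockDiagonal_mul]
    simp only [h2]
  · have := map_sum (blockDiagonalAddMonoidHom n n (Fin c) ℂ)
      (fun i (_ : Fin c) => E i) Finset.univ
    simp only [blockDiagonalAddMonoidHom_apply] at this
    rw [← this]
    have : (∑ i, fun _ : Fin c => E i) = fun _ : Fin c => (1 : Matrix n n ℂ) := by
      funext k
      simpa [Finset.sum_apply] using h3
    rw [this]
    exact blockDiagonal_one

lemma sum_fromBlocks {n1 n2 : Type*} {m : ℕ} (E : Fin m → Matrix n1 n1 ℂ)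
    (F : Fin m → Matrix n2 n2 ℂ) :
    (∑ i, fromBlocks (E i) 0 0 (F i)) = fromBlocks (∑ i, E i) 0 0 (∑ i, F i) := by
  ext (i | i) (j | j) <;> simp [Matrix.sum_apply]

lemma isPVMG_fromBlocks {n1 n2 : Type*} [Fintype n1] [DecidableEq n1] [Fintype n2]
    [DecidableEq n2] {m : ℕ} {E : Fin m → Matrix n1 n1 ℂ} {F : Fin m → Matrix n2 n2 ℂ}
    (hE : IsPVMG E) (hF : IsPVMG F) :
    IsPVMG (fun i => fromBlocks (E i) 0 0 (F i)) := by
  obtain ⟨hE1, hE2, hE3⟩ := hE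
  obtain ⟨hF1, hF2, hF3⟩ := hF
  refine ⟨fun i => ?_, fun i => ?_, ?_⟩
  · show _ = _
    rw [fromBlocks_conjTranspose]
    simp [(hE1 i).eq, (hF1 i).eq]
  · rw [fromBlocks_multiply]
    simp [hE2 i, hF2 i]
  · rw [sum_fromBlocks, hE3, hF3]
    exact fromBlocks_one

lemma isPVM_reindex {n : Type*} [Fintype n] [DecidableEq n] {d m : ℕ} (e : n ≃ Fin d)
    {E : Fin m → Matrix n n ℂ} (h : IsPVMG E) :
    IsPVM (fun i => (E i).submatrix e.symm e.symm) := by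
  obtain ⟨h1, h2, h3⟩ := h
  refine ⟨fun i => (h1 i).submatrix _, fun i => ?_, ?_⟩
  · rw [submatrix_mul_equiv, h2]
  · rw [← submatrix_one_equiv e.symm, ← h3]
    ext i j
    simp [Matrix.sum_apply]

lemma rat_combo_mem_CmaxD {nA nB m d1 d2 : ℕ} (a b : ℕ) (hd1 : d1 ≠ 0) (hd2 : d2 ≠ 0)
    (hab : a + b ≠ 0) {p q : Fin nA → Fin nB → Fin m → Fin m → ℝ}
    (hp : p ∈ CmaxD nA nB m d1) (hq : q ∈ CmaxD nA nB m d2) :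
    ((a / (a + b) : ℝ) • p + (b / (a + b) : ℝ) • q) ∈ CmaxD nA nB m ((a + b) * (d1 * d2)) := by
  obtain ⟨⟨hp0, hp1⟩, E, F, hE, hF, hpEF⟩ := hp
  obtain ⟨⟨hq0, hq1⟩, G, H, hG, hH, hqGH⟩ := hq
  have habR : ((a : ℝ) + (b : ℝ)) ≠ 0 := by
    have := Nat.cast_ne_zero (R := ℝ).mpr hab; push_cast at this; exact this
  have hd1C : (d1 : ℂ) ≠ 0 := Nat.cast_ne_zero.mpr hd1
  have hd2C : (d2 : ℂ) ≠ 0 := Nat.cast_ne_zero.mpr hd2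
  have habC : ((a : ℂ) + (b : ℂ)) ≠ 0 := by
    have := Nat.cast_ne_zero (R := ℂ).mpr hab; push_cast at this; exact this
  set c1 := a * d2 with hc1
  set c2 := b * d1 with hc2
  let ι := (Fin d1 × Fin c1) ⊕ (Fin d2 × Fin c2)
  let e : ι ≃ Fin ((a + b) * (d1 * d2)) :=
    (Equiv.sumCongr finProdFinEquiv finProdFinEquiv).trans
      (finSumFinEquiv.trans (finCongr (by rw [hc1, hc2]; ring)))
  let A : Fin nA → Fin m → Matrix ι ι ℂ := fun x i =>
    fromBlocks (blockDiagonal fun _ : Fin c1 => E x i) 0 0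
      (blockDiagonal fun _ : Fin c2 => G x i)
  let B : Fin nB → Fin m → Matrix ι ι ℂ := fun y j =>
    fromBlocks (blockDiagonal fun _ : Fin c1 => F y j) 0 0
      (blockDiagonal fun _ : Fin c2 => H y j)
  have hA : ∀ x, IsPVMG (A x) := fun x =>
    isPVMG_fromBlocks (isPVMG_blockDiagonal c1 (hE x)) (isPVMG_blockDiagonal c2 (hG x))
  have hB : ∀ y, IsPVMG (B y) := fun y =>
    isPVMG_fromBlocks (isPVMG_blockDiagonal c1 (hF y)) (isPVMG_blockDiagonal c2 (hH y))
  refine ⟨⟨fun x y i j => ?_, fun x y => ?_⟩,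
    fun x i => (A x i).submatrix e.symm e.symm,
    fun y j => (B y j).submatrix e.symm e.symm,
    fun x => isPVM_reindex e (hA x), fun y => isPVM_reindex e (hB y), ?_⟩
  · simp only [Pi.add_apply, Pi.smul_apply, smul_eq_mul]
    have w1 : (0:ℝ) ≤ (a : ℝ) / ((a:ℝ) + b) := by positivity
    have w2 : (0:ℝ) ≤ (b : ℝ) / ((a:ℝ) + b) := by positivity
    exact add_nonneg (mul_nonneg w1 (hp0 x y i j)) (mul_nonneg w2 (hq0 x y i j))
  · simp only [Pi.add_apply, Pi.smul_apply, smul_eq_mul]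
    calc ∑ i, ∑ j, (((a:ℝ) / ((a:ℝ)+b)) * p x y i j + ((b:ℝ) / ((a:ℝ)+b)) * q x y i j)
        = ((a:ℝ) / ((a:ℝ)+b)) * ∑ i, ∑ j, p x y i j
            + ((b:ℝ) / ((a:ℝ)+b)) * ∑ i, ∑ j, q x y i j := by
          simp [Finset.sum_add_distrib, Finset.mul_sum]
      _ = 1 := by rw [hp1, hq1]; field_simp
  · intro x y i j
    rw [submatrix_mul_equiv, trace_submatrix_equiv']
    have htr : (A x i * B y j).trace
        = (c1 : ℂ) * (E x i * F y j).trace + (c2 : ℂ) * (G x i * H y j).trace := by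
      show ((fromBlocks (blockDiagonal fun _ : Fin c1 => E x i) 0 0
          (blockDiagonal fun _ : Fin c2 => G x i)) *
        (fromBlocks (blockDiagonal fun _ : Fin c1 => F y j) 0 0
          (blockDiagonal fun _ : Fin c2 => H y j))).trace = _
      rw [fromBlocks_multiply]
      simp only [Matrix.zero_mul, Matrix.mul_zero, add_zero, zero_add]
      rw [trace_fromBlocks', ← blockDiagonal_mul, ← blockDiagonal_mul,
        trace_blockDiagonal, trace_blockDiagonal]
      simp [Finset.sum_const, nsmul_eq_mul]
    rw [htr]
    have e1 : (E x i * F y j).trace = (d1 : ℂ) * (p x y i j : ℂ) := by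
      rw [hpEF x y i j]; field_simp
    have e2 : (G x i * H y j).trace = (d2 : ℂ) * (q x y i j : ℂ) := by
      rw [hqGH x y i j]; field_simp
    rw [e1, e2]
    simp only [Pi.add_apply, Pi.smul_apply, smul_eq_mul, hc1, hc2]
    push_cast
    field_simp

lemma convex_closure_of_rat {V : Type*} [AddCommGroup V] [Module ℝ V] [TopologicalSpace V]
    [IsTopologicalAddGroup V] [ContinuousSMul ℝ V] {S : Set V}
    (hS : ∀ a b : ℕ, a + b ≠ 0 → ∀ p ∈ S, ∀ q ∈ S,
      ((a : ℝ) / ((a : ℝ) + (b : ℝ))) • p + ((b : ℝ) / ((a : ℝ) + (b : ℝ))) • q ∈ S) :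
    Convex ℝ (closure S) := by
  have seg : ∀ p ∈ S, ∀ q ∈ S, ∀ t : ℝ, 0 ≤ t → t ≤ 1 →
      t • p + (1 - t) • q ∈ closure S := by
    intro p hp q hq t ht0 ht1
    set clamp : ℝ → ℝ := fun s => max 0 (min s 1) with hclamp
    have hc : Continuous clamp := continuous_const.max (continuous_id.min continuous_const)
    set f : ℝ → V := fun s => clamp s • p + (1 - clamp s) • q with hfdef
    have hf : Continuous f :=
      (hc.smul continuous_const).add ((continuous_const.sub hc).smul continuous_const)
    have hft : f t = t • p + (1 - t) • q := by
      simp [hfdef, hclamp, min_eq_left ht1, max_eq_right ht0]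
    have hmaps : Set.MapsTo f (Set.range ((↑) : ℚ → ℝ)) S := by
      rintro s ⟨r, rfl⟩
      set u : ℚ := max 0 (min r 1) with hu
      have hcast : clamp (r : ℝ) = (u : ℝ) := by
        simp only [hclamp, hu]; norm_cast
      have hu0 : (0 : ℚ) ≤ u := le_max_left _ _
      have hu1 : u ≤ 1 := max_le (by norm_num) (min_le_right _ _)
      have hnum : 0 ≤ u.num := Rat.num_nonneg.mpr hu0
      set a : ℕ := u.num.toNat with ha
      have hden0 : (0 : ℝ) < (u.den : ℝ) := by
        exact_mod_cast u.den_pos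
      have haR : (a : ℝ) = (u.num : ℝ) := by
        rw [ha]; exact_mod_cast Int.toNat_of_nonneg hnum
      have hx : (u : ℝ) = (a : ℝ) / (u.den : ℝ) := by
        rw [Rat.cast_def, haR]
      have hale : a ≤ u.den := by
        have h1 : (u : ℝ) ≤ 1 := by exact_mod_cast hu1
        rw [hx] at h1
        have := (div_le_one hden0).mp h1
        exact_mod_cast this
      set b : ℕ := u.den - a with hb
      have habn : a + b = u.den := by omega
      have hab : a + b ≠ 0 := by
        rw [habn]; exact u.den_nz
      have hsum : (a : ℝ) + (b : ℝ) = (u.den : ℝ) := by exact_mod_cast habn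
      have hw1 : (a : ℝ) / ((a : ℝ) + (b : ℝ)) = (u : ℝ) := by rw [hsum, hx]
      have hw2 : (b : ℝ) / ((a : ℝ) + (b : ℝ)) = 1 - (u : ℝ) := by
        rw [hsum, hx]
        have hbR : (b : ℝ) = (u.den : ℝ) - (a : ℝ) := by
          rw [← hsum]; ring
        rw [hbR]
        field_simp
      have := hS a b hab p hp q hq
      rw [hw1, hw2] at this
      show f (r : ℝ) ∈ S
      rw [hfdef]
      simpa [hcast] using this
    have ht : (t : ℝ) ∈ closure (Set.range ((↑) : ℚ → ℝ)) := Rat.denseRange_cast t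
    exact hft ▸ map_mem_closure hf ht hmaps
  intro x hx y hy s t hs ht hst
  have h2 : ∀ p ∈ S, ∀ q ∈ S, s • p + t • q ∈ closure S := by
    intro p hp q hq
    have hts : t = 1 - s := by linarith
    rw [hts]
    exact seg p hp q hq s hs (by linarith)
  have hcont : Continuous fun pq : V × V => s • pq.1 + t • pq.2 :=
    (continuous_fst.const_smul s).add (continuous_snd.const_smul t)
  have := map_mem_closure₂ (f := fun p q : V => s • p + t • q) hcont hx hy h2
  rwa [closure_closure] at this

lemma rat_combo_mem_Cmax {nA nB m : ℕ} (a b : ℕ) (hab : a + b ≠ 0)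
    {p q : Fin nA → Fin nB → Fin m → Fin m → ℝ}
    (hp : p ∈ Cmax nA nB m) (hq : q ∈ Cmax nA nB m) :
    ((a : ℝ) / ((a : ℝ) + (b : ℝ))) • p + ((b : ℝ) / ((a : ℝ) + (b : ℝ))) • q ∈ Cmax nA nB m := by
  simp only [Cmax, Set.mem_iUnion] at hp hq ⊢
  obtain ⟨d1, hd1, hp⟩ := hp
  obtain ⟨d2, hd2, hq⟩ := hq
  refine ⟨(a + b) * (d1 * d2), ?_, ?_⟩
  · have : (a + b) * (d1 * d2) ≠ 0 :=
      mul_ne_zero hab (mul_ne_zero (by omega) (by omega))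
    omega
  · exact rat_combo_mem_CmaxD a b (by omega) (by omega) hab hp hq

/-- STATEMENT 5: `C_max` is dense in its own convex hull, and likewise for `C_max^s`. -/
theorem convexHull_Cmax_subset_closure (nA nB m n m' : ℕ) :
    convexHull ℝ (Cmax nA nB m) ⊆ closure (Cmax nA nB m) ∧
    convexHull ℝ (CmaxSync n m') ⊆ closure (CmaxSync n m') := by
  constructor
  · exact convexHull_min subset_closure
      (convex_closure_of_rat fun a b hab p hp q hq => rat_combo_mem_Cmax a b hab hp hq)
  · refine convexHull_min subset_closure (convex_closure_of_rat ?_)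
    intro a b hab p hp q hq
    obtain ⟨hp1, hp2⟩ := hp
    obtain ⟨hq1, hq2⟩ := hq
    refine ⟨rat_combo_mem_Cmax a b hab hp1 hq1, ?_⟩
    intro x i j hij
    simp [Pi.add_apply, Pi.smul_apply, hp2 x i j hij, hq2 x i j hij]
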